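/- For any permutation w in the symmetric group S_N, the recording tableau of the Robinson–Schensted correspondence applied to w equals the insertion tableau of the Robinson–Schensted correspondence applied to w⁻¹; that is, Q(w) = P(w⁻¹). -/

import Mathlib

/-- Schensted bumping of `x` into a row: replace the leftmost entry `y > x` by `x`
(returning the bumped entry), or append `x` at the end of the row. -/
def bump (x : ℕ) : List ℕ → List ℕ × Option ℕ
  | [] => ([x], none)
  | y :: ys =>
    if x < y then (x :: ys, some y)
    else
      let p := bump x ys
      (y :: p.1, p.2)

/-- Schensted insertion of `x` into a tableau (a list of rows, bottom row first). -/
def insertT (x : ℕ) : List (List ℕ) → List (List ℕ)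
  | [] => [[x]]
  | row :: rest =>
    match bump x row with
    | (r, none) => r :: rest
    | (r, some y) => r :: insertT y rest

/-- The insertion tableau `P(w)` of a word `w`. -/
def Ptab (w : List ℕ) : List (List ℕ) :=
  w.foldl (fun t x => insertT x t) []

/-- Update the recording tableau: append the label `k` to the row of `q` where the
shape grew when passing from `p` to `p'`. -/
def Qstep (p p' q : List (List ℕ)) (k : ℕ) : List (List ℕ) :=
  (List.range p'.length).map fun i =>
    if (p.getD i []).length < (p'.getD i []).length then (q.getD i []) ++ [k]
    else q.getD i []

/-- The pair `(P(w), Q(w))` of the Robinson–Schensted correspondence: `P` is built by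
Schensted insertion of the letters of `w`, and `Q` records the order in which boxes
are added. -/
def PQ (w : List ℕ) : List (List ℕ) × List (List ℕ) :=
  (List.range w.length).foldl
    (fun pq k =>
      let p' := insertT (w.getD k 0) pq.1
      (p', Qstep pq.1 p' pq.2 (k + 1)))
    ([], [])

/-- The word `w(1), …, w(N)` of a permutation `w ∈ S_N` (with values in `{1,…,N}`). -/
def word {N : ℕ} (w : Equiv.Perm (Fin N)) : List ℕ :=
  List.ofFn fun i : Fin N => (w i : ℕ) + 1


section RSK
open List

theorem eq_of_perm_of_sorted {α : Type*} {r : α → α → Prop} [Std.Antisymm r] {l₁ l₂ : List α}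
    (hp : l₁ ~ l₂) (hs₁ : l₁.Pairwise r) (hs₂ : l₂.Pairwise r) : l₁ = l₂ :=
  Perm.eq_of_pairwise' hs₁ hs₂ hp


/-- minimum of a list of naturals (0 for empty). -/
def nmin : List ℕ → ℕ
  | [] => 0
  | a :: l => l.foldr min a

lemma foldr_min_mem : ∀ (l : List ℕ) (a : ℕ), l.foldr min a ∈ a :: l := by
  intro l
  induction l with
  | nil => simp
  | cons b l ih =>
    intro a
    simp only [foldr_cons]
    rcases le_total b (l.foldr min a) with h | h
    · rw [min_eq_left h]; simp
    · rw [min_eq_right h]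
      rcases mem_cons.mp (ih a) with h' | h' <;> simp [h']

lemma foldr_min_le : ∀ (l : List ℕ) (a b : ℕ), b ∈ a :: l → l.foldr min a ≤ b := by
  intro l
  induction l with
  | nil => intro a b hb; simp at hb; simp [hb]
  | cons c l ih =>
    intro a b hb
    simp only [foldr_cons]
    rcases mem_cons.mp hb with rfl | hb'
    · exact le_trans (min_le_right _ _) (ih _ b (by simp))
    · rcases mem_cons.mp hb' with rfl | hb''
      · exact min_le_left _ _
      · exact le_trans (min_le_right _ _) (ih a b (mem_cons_of_mem _ hb''))

lemma nmin_mem {l : List ℕ} (h : l ≠ []) : nmin l ∈ l := by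
  cases l with
  | nil => simp at h
  | cons a l => exact foldr_min_mem l a

lemma nmin_le {l : List ℕ} {b : ℕ} (hb : b ∈ l) : nmin l ≤ b := by
  cases l with
  | nil => simp at hb
  | cons a l => exact foldr_min_le l a b hb

lemma nmin_eq {l : List ℕ} {a : ℕ} (ha : a ∈ l) (h : ∀ b ∈ l, a ≤ b) : nmin l = a :=
  le_antisymm (nmin_le ha) (h _ (nmin_mem (ne_nil_of_mem ha)))

lemma nmin_perm {l l' : List ℕ} (h : l ~ l') : nmin l = nmin l' := by
  rcases eq_or_ne l [] with rfl | hne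
  · rw [h.symm.eq_nil]
  · have hne' : l' ≠ [] := fun hl => hne ((hl ▸ h).eq_nil)
    exact le_antisymm (nmin_le (h.symm.subset (nmin_mem hne')))
      (nmin_le (h.subset (nmin_mem hne)))

lemma exists_max_nat : ∀ (l : List ℕ), l ≠ [] → ∃ m ∈ l, ∀ x ∈ l, x ≤ m := by
  intro l
  induction l with
  | nil => simp
  | cons a l ih =>
    intro _
    rcases eq_or_ne l [] with rfl | h
    · exact ⟨a, by simp⟩
    · rcases ih h with ⟨m, hm, hmax⟩
      rcases le_total a m with h' | h'
      · refine ⟨m, by simp [hm], ?_⟩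
        intro x hx; rcases mem_cons.mp hx with rfl | hx
        · exact h'
        · exact hmax x hx
      · refine ⟨a, by simp, ?_⟩
        intro x hx; rcases mem_cons.mp hx with rfl | hx
        · exact le_rfl
        · exact le_trans (hmax x hx) h'



lemma bump_lt (x : ℕ) (row : List ℕ)
    (h : row.findIdx (fun t => decide (x < t)) < row.length) :
    bump x row = (row.set (row.findIdx (fun t => decide (x < t))) x,
      some (row.getD (row.findIdx (fun t => decide (x < t))) 0)) := by
  induction row with
  | nil => simp at h
  | cons y ys ih =>
    by_cases hxy : x < y
    · simp [bump, hxy, findIdx_cons]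
    · have hf : (y :: ys).findIdx (fun t => decide (x < t)) =
        ys.findIdx (fun t => decide (x < t)) + 1 := by
        simp [findIdx_cons, hxy]
      rw [hf] at h ⊢
      have h' : ys.findIdx (fun t => decide (x < t)) < ys.length := by
        simpa using h
      simp only [bump, if_neg hxy]
      rw [ih h']
      simp

lemma bump_eq (x : ℕ) (row : List ℕ)
    (h : row.findIdx (fun t => decide (x < t)) = row.length) :
    bump x row = (row ++ [x], none) := by
  induction row with
  | nil => simp [bump]
  | cons y ys ih =>
    by_cases hxy : x < y
    · exfalso; simp [findIdx_cons, hxy] at h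
    · have hf : (y :: ys).findIdx (fun t => decide (x < t)) =
        ys.findIdx (fun t => decide (x < t)) + 1 := by
        simp [findIdx_cons, hxy]
      rw [hf] at h
      simp only [length_cons, Nat.add_right_cancel_iff] at h
      simp only [bump, if_neg hxy]
      rw [ih h]
      simp

lemma bump_split (x : ℕ) (row : List ℕ) :
    (row.findIdx (fun t => decide (x < t)) < row.length ∧
      bump x row = (row.set (row.findIdx (fun t => decide (x < t))) x,
        some (row.getD (row.findIdx (fun t => decide (x < t))) 0)))
    ∨ (row.findIdx (fun t => decide (x < t)) = row.length ∧
        bump x row = (row ++ [x], none)) := by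
  rcases lt_or_eq_of_le (findIdx_le_length (p := fun t => decide (x < t)) (xs := row)) with h | h
  · exact Or.inl ⟨h, bump_lt x row h⟩
  · exact Or.inr ⟨h, bump_eq x row h⟩

lemma bump_none_len {x : ℕ} {row r : List ℕ} (h : bump x row = (r, none)) :
    r.length = row.length + 1 := by
  rcases bump_split x row with ⟨_, h'⟩ | ⟨_, h'⟩ <;> rw [h'] at h <;>
      simp only [Prod.mk.injEq] at h
  · exact absurd h.2 (by simp)
  · rw [← h.1]; simp

lemma bump_some_len {x y : ℕ} {row r : List ℕ} (h : bump x row = (r, some y)) :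
    r.length = row.length := by
  rcases bump_split x row with ⟨_, h'⟩ | ⟨_, h'⟩ <;> rw [h'] at h <;>
      simp only [Prod.mk.injEq] at h
  · rw [← h.1]; simp
  · exact absurd h.2 (by simp)

/-- row index where insertion grows the shape -/
def gr (x : ℕ) : List (List ℕ) → ℕ
  | [] => 0
  | row :: rest =>
    match bump x row with
    | (_, none) => 0
    | (_, some y) => gr y rest + 1

lemma gr_le (x : ℕ) (t : List (List ℕ)) : gr x t ≤ t.length := by
  induction t generalizing x with
  | nil => simp [gr]
  | cons row rest ih =>
    rcases h : bump x row with ⟨r, o⟩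
    cases o with
    | none => simp [gr, h]
    | some y => simp only [gr, h, length_cons]; exact Nat.succ_le_succ (ih y)

lemma insertT_len (x : ℕ) (t : List (List ℕ)) :
    (insertT x t).length = max t.length (gr x t + 1) := by
  induction t generalizing x with
  | nil => simp [insertT, gr]
  | cons row rest ih =>
    rcases h : bump x row with ⟨r, o⟩
    cases o with
    | none => simp only [insertT, gr, h, length_cons]; omega
    | some y =>
      simp only [insertT, gr, h, length_cons, ih y]
      omega

lemma insertT_row (x : ℕ) (t : List (List ℕ)) (i : ℕ) :
    ((insertT x t).getD i []).length
      = (t.getD i []).length + (if i = gr x t then 1 else 0) := by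
  induction t generalizing x i with
  | nil =>
    simp only [insertT, gr]
    cases i <;> simp
  | cons row rest ih =>
    rcases h : bump x row with ⟨r, o⟩
    cases o with
    | none =>
      simp only [insertT, gr, h]
      cases i with
      | zero => simpa using bump_none_len h
      | succ j => simp
    | some y =>
      simp only [insertT, gr, h]
      cases i with
      | zero => simpa using bump_some_len h
      | succ j => simpa using ih y j


def qstep (g : ℕ) (q : List (List ℕ)) (k : ℕ) : List (List ℕ) :=
  if g < q.length then q.set g (q.getD g [] ++ [k]) else q ++ [[k]]

lemma qstep_len {g k : ℕ} {q : List (List ℕ)} (h : g ≤ q.length) :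
    (qstep g q k).length = max q.length (g + 1) := by
  unfold qstep; split <;> rename_i h' <;> simp <;> omega

lemma qstep_getD {g k : ℕ} {q : List (List ℕ)} (h : g ≤ q.length) (i : ℕ) :
    (qstep g q k).getD i [] = (q.getD i []) ++ (if i = g then [k] else []) := by
  unfold qstep; split <;> rename_i h'
  · by_cases hig : i = g
    · subst hig
      rw [getD_eq_getElem _ _ (by simpa using h'), getElem_set, if_pos rfl,
        getD_eq_getElem _ _ h', if_pos rfl]
    · by_cases hi : i < q.length
      · rw [getD_eq_getElem _ _ (by simpa using hi), getElem_set, if_neg (Ne.symm hig),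
          getD_eq_getElem _ _ hi, if_neg hig, append_nil]
      · rw [getD_eq_default _ _ (by simpa using not_lt.mp hi),
          getD_eq_default _ _ (not_lt.mp hi), if_neg hig, append_nil]
  · have hg : g = q.length := le_antisymm h (not_lt.mp h')
    by_cases hig : i = g
    · subst hig; rw [hg]
      rw [getD_eq_getElem _ _ (by simp), getElem_append_right (by simp)]
      simp [getD_eq_default]
    · by_cases hi : i < q.length
      · rw [getD_append _ _ _ _ hi, if_neg hig, append_nil]
      · rw [getD_eq_default _ _ (by simp; omega),
          getD_eq_default _ _ (not_lt.mp hi), if_neg hig, append_nil]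

lemma qstep_cons {g k : ℕ} {s : List ℕ} {q : List (List ℕ)} :
    qstep (g + 1) (s :: q) k = s :: qstep g q k := by
  unfold qstep
  split <;> rename_i h'
  · rw [if_pos (by simpa using h')]; simp
  · rw [if_neg (by simp at h' ⊢; omega)]; simp

lemma Qstep_qstep {p q : List (List ℕ)} (hlen : p.length = q.length)
    (hrow : ∀ i, (p.getD i []).length = (q.getD i []).length) (x k : ℕ) :
    Qstep p (insertT x p) q k = qstep (gr x p) q k := by
  have hg : gr x p ≤ q.length := hlen ▸ gr_le x p
  apply List.ext_getElem
  · simp [Qstep, insertT_len, qstep_len hg, hlen]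
  · intro i h1 h2
    have hi : i < (insertT x p).length := by simpa [Qstep] using h1
    simp only [Qstep]
    rw [List.getElem_map, List.getElem_range]
    have hcond : ((p.getD i []).length < ((insertT x p).getD i []).length) ↔ i = gr x p := by
      rw [insertT_row]; split <;> simp_all
    have hq : (qstep (gr x p) q k)[i] = (qstep (gr x p) q k).getD i [] := by
      rw [getD_eq_getElem _ _ h2]
    rw [hq, qstep_getD hg]
    by_cases hig : i = gr x p
    · rw [if_pos (hcond.mpr hig), if_pos hig]
    · rw [if_neg (fun hc => hig (hcond.mp hc)), if_neg hig, append_nil]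

lemma ShEq_step {p q : List (List ℕ)} (hlen : p.length = q.length)
    (hrow : ∀ i, (p.getD i []).length = (q.getD i []).length) (x k : ℕ) :
    (insertT x p).length = (qstep (gr x p) q k).length ∧
    ∀ i, ((insertT x p).getD i []).length = ((qstep (gr x p) q k).getD i []).length := by
  have hg : gr x p ≤ q.length := hlen ▸ gr_le x p
  constructor
  · rw [insertT_len, qstep_len hg, hlen]
  · intro i
    rw [insertT_row, qstep_getD hg, length_append, hrow i]
    split <;> simp

def rstep (s : List ℕ × List (ℕ × ℕ) × List ℕ) (ix : ℕ × ℕ) :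
    List ℕ × List (ℕ × ℕ) × List ℕ :=
  match bump ix.2 s.1 with
  | (r, none) => (r, s.2.1, s.2.2 ++ [ix.1])
  | (r, some y) => (r, s.2.1 ++ [(ix.1, y)], s.2.2)

def rsim (A : List (ℕ × ℕ)) : List ℕ × List (ℕ × ℕ) × List ℕ :=
  A.foldl rstep ([], [], [])

lemma rsim_shift : ∀ (A : List (ℕ × ℕ)) (row : List ℕ) (e0 : List (ℕ × ℕ)) (c0 : List ℕ),
    A.foldl rstep (row, e0, c0)
      = ((A.foldl rstep (row, [], [])).1,
          e0 ++ (A.foldl rstep (row, [], [])).2.1,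
          c0 ++ (A.foldl rstep (row, [], [])).2.2) := by
  intro A
  induction A with
  | nil => simp
  | cons ix A ih =>
    intro row e0 c0
    simp only [foldl_cons]
    rcases h : bump ix.2 row with ⟨r, o⟩
    cases o with
    | none =>
      have h1 : rstep (row, e0, c0) ix = (r, e0, c0 ++ [ix.1]) := by simp [rstep, h]
      have h2 : rstep (row, [], []) ix = (r, [], [ix.1]) := by simp [rstep, h]
      rw [h1, h2, ih r e0 (c0 ++ [ix.1]), ih r [] [ix.1]]
      simp
    | some y =>
      have h1 : rstep (row, e0, c0) ix = (r, e0 ++ [(ix.1, y)], c0) := by simp [rstep, h]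
      have h2 : rstep (row, [], []) ix = (r, [(ix.1, y)], []) := by simp [rstep, h]
      rw [h1, h2, ih r (e0 ++ [(ix.1, y)]) c0, ih r [(ix.1, y)] []]
      simp

def pqlstep (pq : List (List ℕ) × List (List ℕ)) (ix : ℕ × ℕ) :
    List (List ℕ) × List (List ℕ) :=
  (insertT ix.2 pq.1, qstep (gr ix.2 pq.1) pq.2 ix.1)

def PQL (A : List (ℕ × ℕ)) : List (List ℕ) × List (List ℕ) :=
  A.foldl pqlstep ([], [])

lemma DEC : ∀ (A : List (ℕ × ℕ)) (row : List ℕ) (rest : List (List ℕ))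
    (s : List ℕ) (qrest : List (List ℕ)),
    A.foldl pqlstep (row :: rest, s :: qrest)
      = ((A.foldl rstep (row, [], [])).1 ::
            ((A.foldl rstep (row, [], [])).2.1.foldl pqlstep (rest, qrest)).1,
         (s ++ (A.foldl rstep (row, [], [])).2.2) ::
            ((A.foldl rstep (row, [], [])).2.1.foldl pqlstep (rest, qrest)).2) := by
  intro A
  induction A with
  | nil => simp
  | cons ix A ih =>
    intro row rest s qrest
    simp only [foldl_cons]
    rcases h : bump ix.2 row with ⟨r, o⟩
    cases o with
    | none =>
      have h1 : pqlstep (row :: rest, s :: qrest) ix = (r :: rest, (s ++ [ix.1]) :: qrest) := by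
        simp only [pqlstep, insertT, gr, h]
        congr 1
      have h2 : rstep (row, [], []) ix = (r, [], [ix.1]) := by simp [rstep, h]
      rw [h1, h2, ih r rest (s ++ [ix.1]) qrest, rsim_shift A r [] [ix.1]]
      simp
    | some y =>
      have h1 : pqlstep (row :: rest, s :: qrest) ix
          = (r :: insertT y rest, s :: qstep (gr y rest) qrest ix.1) := by
        simp only [pqlstep, insertT, gr, h]
        rw [qstep_cons]
      have h2 : rstep (row, [], []) ix = (r, [(ix.1, y)], []) := by simp [rstep, h]
      rw [h1, h2, ih r (insertT y rest) s (qstep (gr y rest) qrest ix.1),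
        rsim_shift A r [(ix.1, y)] []]
      rw [singleton_append, foldl_cons]
      rfl

lemma DEC0 {A : List (ℕ × ℕ)} (h : A ≠ []) :
    PQL A = ((rsim A).1 :: (PQL (rsim A).2.1).1,
             (rsim A).2.2 :: (PQL (rsim A).2.1).2) := by
  rcases A with _ | ⟨ix, A⟩
  · simp at h
  · have h1 : pqlstep ([], []) ix = ([[ix.2]], [[ix.1]]) := by
      simp [pqlstep, insertT, gr, qstep]
    have h2 : rsim (ix :: A) = ((A.foldl rstep ([ix.2], [], [])).1,
        (A.foldl rstep ([ix.2], [], [])).2.1,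
        [ix.1] ++ (A.foldl rstep ([ix.2], [], [])).2.2) := by
      simp only [rsim, foldl_cons]
      have h0 : rstep ([], [], []) ix = ([ix.2], [], [ix.1]) := by simp [rstep, bump]
      rw [h0, rsim_shift A [ix.2] [] [ix.1]]
      simp
    simp only [PQL, foldl_cons]
    rw [h1, DEC A [ix.2] [] [ix.1] [], h2]


def SI (A : List (ℕ × ℕ)) : Prop :=
  (A.map Prod.fst).Pairwise (· < ·) ∧ (A.map Prod.snd).Nodup

def HC (A : List (ℕ × ℕ)) (p : ℕ × ℕ) (k : ℕ) : Prop :=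
  ∃ c : List (ℕ × ℕ), c <+ A ∧ (c.map Prod.snd).Pairwise (· < ·) ∧
    c.getLast? = some p ∧ c.length = k

open Classical in
noncomputable def ht (A : List (ℕ × ℕ)) (p : ℕ × ℕ) : ℕ :=
  Nat.findGreatest (HC A p) A.length

open Classical in
noncomputable def mxh (A : List (ℕ × ℕ)) : ℕ :=
  Nat.findGreatest (fun k => ∃ p ∈ A, ht A p = k) A.length

noncomputable def pile (A : List (ℕ × ℕ)) (c : ℕ) : List (ℕ × ℕ) :=
  A.filter (fun p => decide (ht A p = c + 1))

lemma sublist_single {α : Type*} {l : List α} {a : α} (h : l <+ [a]) : l = [] ∨ l = [a] := by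
  cases h with
  | cons _ h' => left; exact List.sublist_nil.mp h'
  | cons_cons _ h' => right; rw [List.sublist_nil.mp h']

lemma HC_one {A : List (ℕ × ℕ)} {p : ℕ × ℕ} (h : p ∈ A) : HC A p 1 :=
  ⟨[p], singleton_sublist.mpr h, by simp, by simp, by simp⟩

lemma HC_len_le {A : List (ℕ × ℕ)} {p : ℕ × ℕ} {k : ℕ} (h : HC A p k) : k ≤ A.length := by
  obtain ⟨c, hc, _, _, rfl⟩ := h; exact hc.length_le

lemma HC_mem {A : List (ℕ × ℕ)} {p : ℕ × ℕ} {k : ℕ} (h : HC A p k) : p ∈ A := by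
  obtain ⟨c, hc, _, hl, _⟩ := h
  obtain ⟨ys, rfl⟩ := getLast?_eq_some_iff.mp hl
  exact hc.subset (by simp)

open Classical in
lemma ht_spec {A : List (ℕ × ℕ)} {p : ℕ × ℕ} (h : p ∈ A) : HC A p (ht A p) :=
  Nat.findGreatest_spec (m := 1) (length_pos_iff.mpr (ne_nil_of_mem h)) (HC_one h)

open Classical in
lemma ht_pos {A : List (ℕ × ℕ)} {p : ℕ × ℕ} (h : p ∈ A) : 1 ≤ ht A p :=
  Nat.le_findGreatest (length_pos_iff.mpr (ne_nil_of_mem h)) (HC_one h)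

open Classical in
lemma ht_le_len {A : List (ℕ × ℕ)} {p : ℕ × ℕ} : ht A p ≤ A.length :=
  Nat.findGreatest_le _

open Classical in
lemma ht_ge {A : List (ℕ × ℕ)} {p : ℕ × ℕ} {k : ℕ} (h : HC A p k) : k ≤ ht A p :=
  Nat.le_findGreatest (HC_len_le h) h

lemma ht_lt_not {A : List (ℕ × ℕ)} {p : ℕ × ℕ} {k : ℕ} (h : ht A p < k) : ¬ HC A p k :=
  fun hc => absurd (ht_ge hc) (by omega)

lemma mem_fst_le_getLast {c : List (ℕ × ℕ)} {r : ℕ × ℕ} (f : ℕ × ℕ → ℕ)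
    (hs : (c.map f).Pairwise (· < ·)) (hl : c.getLast? = some r) :
    ∀ x ∈ c, f x ≤ f r := by
  obtain ⟨ys, rfl⟩ := getLast?_eq_some_iff.mp hl
  intro x hx
  rcases mem_append.mp hx with hx | hx
  · rw [map_append] at hs
    rcases pairwise_append.mp hs with ⟨_, _, h3⟩
    exact le_of_lt (h3 _ (mem_map_of_mem (f := f) hx) _ (by simp))
  · simp at hx; simp [hx]

lemma chain_ext_sublist {A c : List (ℕ × ℕ)} {p : ℕ × ℕ}
    (hs : (A.map Prod.fst).Pairwise (· < ·)) (hc : c <+ A)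
    (hall : ∀ x ∈ c, x.1 < p.1) (hp : p ∈ A) : c ++ [p] <+ A := by
  induction A generalizing c with
  | nil => simp at hp
  | cons a A ih =>
    have hs' : (A.map Prod.fst).Pairwise (· < ·) := by
      rw [map_cons, pairwise_cons] at hs; exact hs.2
    have haA : ∀ x ∈ A, a.1 < x.1 := by
      rw [map_cons, pairwise_cons] at hs
      intro x hx; exact hs.1 _ (mem_map_of_mem hx)
    rcases mem_cons.mp hp with rfl | hp'
    · have : c = [] := by
        rw [eq_nil_iff_forall_not_mem]
        intro x hx
        have h1 := hall x hx
        rcases mem_cons.mp (hc.subset hx) with rfl | hx'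
        · exact absurd h1 (lt_irrefl _)
        · exact absurd (lt_trans (haA x hx') h1) (lt_irrefl _)
      rw [this]; simpa using hp
    · rcases sublist_cons_iff.mp hc with hc' | ⟨r, rfl, hr⟩
      · exact (ih hs' hc' (fun x hx => hall x hx) hp').cons a
      · have := ih hs' hr (fun x hx => hall x (mem_cons_of_mem _ hx)) hp'
        simpa using this.cons₂ a

lemma HC_extend {A : List (ℕ × ℕ)} {r p : ℕ × ℕ} {k : ℕ}
    (hs : (A.map Prod.fst).Pairwise (· < ·)) (h : HC A r k)
    (h1 : r.1 < p.1) (h2 : r.2 < p.2) (hp : p ∈ A) : HC A p (k + 1) := by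
  obtain ⟨c, hc, hchain, hlast, rfl⟩ := h
  have hcf : (c.map Prod.fst).Pairwise (· < ·) := Pairwise.sublist (hc.map Prod.fst) hs
  refine ⟨c ++ [p], chain_ext_sublist hs hc
    (fun x hx => lt_of_le_of_lt (mem_fst_le_getLast Prod.fst hcf hlast x hx) h1) hp, ?_, ?_, ?_⟩
  · rw [map_append]
    refine List.pairwise_append.mpr ⟨hchain, by simp, ?_⟩
    intro a ha b hb
    simp at hb; subst hb
    obtain ⟨x, hx, rfl⟩ := mem_map.mp ha
    exact lt_of_le_of_lt (mem_fst_le_getLast Prod.snd hchain hlast x hx) h2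
  · exact getLast?_concat
  · simp

lemma HC_chop {A : List (ℕ × ℕ)} {p : ℕ × ℕ} {k : ℕ}
    (hs : (A.map Prod.fst).Pairwise (· < ·)) (h : HC A p (k + 1)) (hk : 1 ≤ k) :
    ∃ r, HC A r k ∧ r.1 < p.1 ∧ r.2 < p.2 := by
  obtain ⟨c, hc, hchain, hlast, hlen⟩ := h
  obtain ⟨d, rfl⟩ := getLast?_eq_some_iff.mp hlast
  have hd : d ≠ [] := by
    intro hd; rw [hd] at hlen; simp at hlen; omega
  refine ⟨d.getLast hd, ⟨d, (sublist_append_left d [p]).trans hc,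
      Pairwise.sublist ((sublist_append_left d [p]).map Prod.snd) hchain,
      getLast?_eq_getLast hd, by simp at hlen; omega⟩, ?_, ?_⟩
  · have hcf : ((d ++ [p]).map Prod.fst).Pairwise (· < ·) := Pairwise.sublist (hc.map Prod.fst) hs
    rw [map_append] at hcf
    rcases pairwise_append.mp hcf with ⟨_, _, h3⟩
    exact h3 _ (mem_map_of_mem (getLast_mem hd)) _ (by simp)
  · rw [map_append] at hchain
    rcases pairwise_append.mp hchain with ⟨_, _, h3⟩
    exact h3 _ (mem_map_of_mem (getLast_mem hd)) _ (by simp)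

lemma ht_lt_of_dom {A : List (ℕ × ℕ)} {r p : ℕ × ℕ}
    (hs : (A.map Prod.fst).Pairwise (· < ·)) (hp : p ∈ A) (hr : r ∈ A)
    (h1 : r.1 < p.1) (h2 : r.2 < p.2) : ht A r < ht A p :=
  lt_of_lt_of_le (Nat.lt_succ_self _) (ht_ge (HC_extend hs (ht_spec hr) h1 h2 hp))

lemma ht_descent {A : List (ℕ × ℕ)} {p : ℕ × ℕ}
    (hs : (A.map Prod.fst).Pairwise (· < ·)) (hp : p ∈ A) (h2 : 2 ≤ ht A p) :
    ∃ r ∈ A, ht A r = ht A p - 1 ∧ r.1 < p.1 ∧ r.2 < p.2 := by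
  have hh := ht_spec hp
  rw [show ht A p = (ht A p - 1) + 1 by omega] at hh
  obtain ⟨r, hr, h1', h2'⟩ := HC_chop hs hh (by omega)
  have hle : ht A p - 1 ≤ ht A r := ht_ge hr
  have hlt : ht A r < ht A p := ht_lt_of_dom hs hp (HC_mem hr) h1' h2'
  exact ⟨r, HC_mem hr, by omega, h1', h2'⟩

lemma descLe {A : List (ℕ × ℕ)}
    (hs : (A.map Prod.fst).Pairwise (· < ·)) :
    ∀ (d : ℕ) (p : ℕ × ℕ) (j : ℕ), p ∈ A → 1 ≤ j → j < ht A p → ht A p - j = d →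
    ∃ r ∈ A, ht A r = j ∧ r.1 < p.1 ∧ r.2 < p.2 := by
  intro d
  induction d with
  | zero => intro p j _ _ h3 h4; omega
  | succ d ih =>
    intro p j hp hj1 hj2 hd
    rcases eq_or_lt_of_le (show j + 1 ≤ ht A p by omega) with heq | hlt
    · obtain ⟨r, hr, hr1, hr2, hr3⟩ := ht_descent hs hp (by omega)
      exact ⟨r, hr, by omega, hr2, hr3⟩
    · obtain ⟨r, hr, hr1, hr2, hr3⟩ := ht_descent hs hp (by omega)
      obtain ⟨r', hr', h1', h2', h3'⟩ := ih r j hr (by omega) (by omega) (by omega)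
      exact ⟨r', hr', h1', lt_trans h2' hr2, lt_trans h3' hr3⟩

open Classical in
lemma ht_le_mxh {A : List (ℕ × ℕ)} {p : ℕ × ℕ} (h : p ∈ A) : ht A p ≤ mxh A :=
  Nat.le_findGreatest ht_le_len ⟨p, h, rfl⟩

open Classical in
lemma mxh_spec {A : List (ℕ × ℕ)} (h : A ≠ []) : ∃ p ∈ A, ht A p = mxh A := by
  obtain ⟨a, ha⟩ := exists_mem_of_ne_nil A h
  exact Nat.findGreatest_spec (P := fun k => ∃ p ∈ A, ht A p = k) (m := ht A a)
    ht_le_len ⟨a, ha, rfl⟩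

lemma mxh_le {A : List (ℕ × ℕ)} {n : ℕ} (h : ∀ p ∈ A, ht A p ≤ n) : mxh A ≤ n := by
  rcases eq_or_ne A [] with rfl | hne
  · simp [mxh]
  · obtain ⟨p, hp, hp'⟩ := mxh_spec hne
    rw [← hp']; exact h p hp

lemma pile_exists {A : List (ℕ × ℕ)}
    (hs : (A.map Prod.fst).Pairwise (· < ·)) {c : ℕ} (hc : c < mxh A) :
    ∃ p ∈ A, ht A p = c + 1 := by
  have hne : A ≠ [] := by
    intro h; subst h; simp [mxh] at hc
  obtain ⟨q, hq, hq'⟩ := mxh_spec hne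
  rcases eq_or_lt_of_le (show c + 1 ≤ ht A q by omega) with heq | hlt
  · exact ⟨q, hq, heq.symm⟩
  · obtain ⟨r, hr, hr', _⟩ := descLe hs (ht A q - (c+1)) q (c+1) hq (by omega) hlt rfl
    exact ⟨r, hr, hr'⟩

lemma fst_lt_of_sorted_append {B : List (ℕ × ℕ)} {p : ℕ × ℕ}
    (hs : ((B ++ [p]).map Prod.fst).Pairwise (· < ·)) : ∀ x ∈ B, x.1 < p.1 := by
  rw [map_append] at hs
  rcases pairwise_append.mp hs with ⟨_, _, h3⟩
  intro x hx
  exact h3 _ (mem_map_of_mem hx) _ (by simp)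

lemma snd_ne_of_nodup_append {B : List (ℕ × ℕ)} {p : ℕ × ℕ}
    (hn : ((B ++ [p]).map Prod.snd).Nodup) : ∀ x ∈ B, x.2 ≠ p.2 := by
  rw [map_append] at hn
  rcases nodup_append.mp hn with ⟨_, _, h3⟩
  intro x hx he
  exact h3 _ (mem_map_of_mem hx) p.2 (by simp) he

lemma SI_of_append {B : List (ℕ × ℕ)} {p : ℕ × ℕ} (h : SI (B ++ [p])) : SI B :=
  ⟨Pairwise.sublist ((sublist_append_left B [p]).map Prod.fst) h.1,
   Nodup.sublist ((sublist_append_left B [p]).map Prod.snd) h.2⟩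

lemma HC_append_iff {B : List (ℕ × ℕ)} {p q : ℕ × ℕ} {k : ℕ}
    (hlt : ∀ x ∈ B, x.1 < p.1) (hq : q ∈ B) :
    HC (B ++ [p]) q k ↔ HC B q k := by
  constructor
  · rintro ⟨c, hc, hchain, hlast, rfl⟩
    obtain ⟨c₁, c₂, rfl, h1, h2⟩ := sublist_append_iff.mp hc
    rcases sublist_single h2 with rfl | rfl
    · exact ⟨c₁, by simpa using h1, by simpa using hchain, by simpa using hlast, by simp⟩
    · rw [getLast?_concat] at hlast
      obtain rfl : p = q := by injection hlast
      exact absurd (hlt _ hq) (lt_irrefl _)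
  · rintro ⟨c, hc, hchain, hlast, rfl⟩
    exact ⟨c, hc.trans (sublist_append_left B [p]), hchain, hlast, rfl⟩

open Classical in
lemma findGreatest_congr {P Q : ℕ → Prop} [DecidablePred P] [DecidablePred Q]
    (h : ∀ k, P k ↔ Q k) (n : ℕ) : Nat.findGreatest P n = Nat.findGreatest Q n := by
  induction n with
  | zero => simp
  | succ n ih =>
    rw [Nat.findGreatest_succ, Nat.findGreatest_succ, ih, if_congr (h (n+1)) rfl rfl]

open Classical in
lemma ht_append {B : List (ℕ × ℕ)} {p q : ℕ × ℕ}
    (hlt : ∀ x ∈ B, x.1 < p.1) (hq : q ∈ B) :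
    ht (B ++ [p]) q = ht B q := by
  rw [ht, ht, length_append, length_cons, length_nil, Nat.findGreatest_succ]
  rw [if_neg, findGreatest_congr (fun k => HC_append_iff hlt hq)]
  intro hcon
  obtain ⟨c, hc, _, hlast, hlen⟩ := hcon
  have : c = B ++ [p] := hc.eq_of_length (by simp [hlen])
  subst this
  rw [getLast?_concat] at hlast
  obtain rfl : p = q := by injection hlast
  exact absurd (hlt _ hq) (lt_irrefl _)

def Edge (A : List (ℕ × ℕ)) (p q : ℕ × ℕ) : Prop :=
  p ∈ A ∧ q ∈ A ∧ ht A q = ht A p ∧ p.2 < q.2 ∧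
    ∀ r ∈ A, ht A r = ht A p → p.2 < r.2 → q.2 ≤ r.2

def hsc (A : List (ℕ × ℕ)) (p : ℕ × ℕ) : Prop := ∃ q, Edge A p q

open Classical in
noncomputable def succ (A : List (ℕ × ℕ)) (p : ℕ × ℕ) : ℕ × ℕ :=
  if h : hsc A p then h.choose else (0, 0)

open Classical in
noncomputable def Epred (A : List (ℕ × ℕ)) : List (ℕ × ℕ) :=
  (A.filter (fun p => decide (hsc A p))).map (fun p => (p.1, (succ A p).2))

noncomputable def Tpred (A : List (ℕ × ℕ)) : List ℕ :=
  (List.range (mxh A)).map (fun c => nmin ((pile A c).map Prod.snd))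

noncomputable def Cpred (A : List (ℕ × ℕ)) : List ℕ :=
  (List.range (mxh A)).map (fun c => nmin ((pile A c).map Prod.fst))

lemma mem_pile_iff {A : List (ℕ × ℕ)} {q : ℕ × ℕ} {c : ℕ} :
    q ∈ pile A c ↔ q ∈ A ∧ ht A q = c + 1 := by
  simp [pile]

lemma Edge_unique {A : List (ℕ × ℕ)} (hA : SI A) {p q q' : ℕ × ℕ}
    (h : Edge A p q) (h' : Edge A p q') : q = q' := by
  obtain ⟨hp, hq, h1, h2, h3⟩ := h
  obtain ⟨_, hq', h1', h2', h3'⟩ := h'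
  have e1 : q.2 ≤ q'.2 := h3 _ hq' h1' h2'
  have e2 : q'.2 ≤ q.2 := h3' _ hq h1 h2
  exact inj_on_of_nodup_map hA.2 hq hq' (le_antisymm e1 e2)

open Classical in
lemma succ_spec {A : List (ℕ × ℕ)} {p : ℕ × ℕ} (h : hsc A p) : Edge A p (succ A p) := by
  rw [succ, dif_pos h]; exact h.choose_spec

lemma succ_eq {A : List (ℕ × ℕ)} (hA : SI A) {p q : ℕ × ℕ} (h : Edge A p q) :
    succ A p = q := Edge_unique hA (succ_spec ⟨q, h⟩) h

lemma Edge_exists {A : List (ℕ × ℕ)} {p : ℕ × ℕ} (hp : p ∈ A)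
    (h : ∃ q ∈ A, ht A q = ht A p ∧ p.2 < q.2) : hsc A p := by
  classical
  obtain ⟨q0, hq0, hh0, hl0⟩ := h
  set L := A.filter (fun q => decide (ht A q = ht A p ∧ p.2 < q.2)) with hL
  have hq0L : q0 ∈ L := by rw [hL, mem_filter]; simp [hq0, hh0, hl0]
  have hLne : (L.map Prod.snd) ≠ [] := by
    simp only [ne_eq, map_eq_nil_iff]
    exact ne_nil_of_mem hq0L
  obtain ⟨q1, hq1L, hq1⟩ := mem_map.mp (nmin_mem hLne)
  have hq1' := mem_filter.mp hq1L
  simp only [decide_eq_true_eq] at hq1'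
  refine ⟨q1, hp, hq1'.1, hq1'.2.1, hq1'.2.2, ?_⟩
  intro r hr hhr hlr
  have hrL : r ∈ L := by rw [hL, mem_filter]; simp [hr, hhr, hlr]
  rw [hq1]
  exact nmin_le (mem_map_of_mem hrL)

lemma Tpred_length {A : List (ℕ × ℕ)} : (Tpred A).length = mxh A := by simp [Tpred]

lemma Cpred_length {A : List (ℕ × ℕ)} : (Cpred A).length = mxh A := by simp [Cpred]

lemma Tpred_getD {A : List (ℕ × ℕ)} {i : ℕ} (h : i < mxh A) :
    (Tpred A).getD i 0 = nmin ((pile A i).map Prod.snd) := by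
  rw [Tpred, getD_eq_getElem _ _ (by simpa using h), List.getElem_map, List.getElem_range]

lemma Cpred_getD {A : List (ℕ × ℕ)} {i : ℕ} (h : i < mxh A) :
    (Cpred A).getD i 0 = nmin ((pile A i).map Prod.fst) := by
  rw [Cpred, getD_eq_getElem _ _ (by simpa using h), List.getElem_map, List.getElem_range]

lemma pile_ne_nil {A : List (ℕ × ℕ)} (hs : (A.map Prod.fst).Pairwise (· < ·))
    {c : ℕ} (hc : c < mxh A) : pile A c ≠ [] := by
  obtain ⟨q, hq, hq'⟩ := pile_exists hs hc
  exact ne_nil_of_mem (mem_pile_iff.mpr ⟨hq, hq'⟩)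

lemma Tpred_min {A : List (ℕ × ℕ)} {q : ℕ × ℕ} {c : ℕ}
    (hq : q ∈ A) (hh : ht A q = c + 1) : (Tpred A).getD c 0 ≤ q.2 := by
  have hc : c < mxh A := by have := ht_le_mxh hq; omega
  rw [Tpred_getD hc]
  exact nmin_le (mem_map_of_mem (mem_pile_iff.mpr ⟨hq, hh⟩))

lemma Cpred_min {A : List (ℕ × ℕ)} {q : ℕ × ℕ} {c : ℕ}
    (hq : q ∈ A) (hh : ht A q = c + 1) : (Cpred A).getD c 0 ≤ q.1 := by
  have hc : c < mxh A := by have := ht_le_mxh hq; omega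
  rw [Cpred_getD hc]
  exact nmin_le (mem_map_of_mem (mem_pile_iff.mpr ⟨hq, hh⟩))

lemma Tpred_mem {A : List (ℕ × ℕ)} (hs : (A.map Prod.fst).Pairwise (· < ·))
    {c : ℕ} (hc : c < mxh A) :
    ∃ q ∈ A, ht A q = c + 1 ∧ q.2 = (Tpred A).getD c 0 := by
  rw [Tpred_getD hc]
  have hne : (pile A c).map Prod.snd ≠ [] := by
    simpa using pile_ne_nil hs hc
  obtain ⟨q, hqp, hq⟩ := mem_map.mp (nmin_mem hne)
  obtain ⟨hqA, hqh⟩ := mem_pile_iff.mp hqp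
  exact ⟨q, hqA, hqh, hq⟩

lemma Cpred_mem {A : List (ℕ × ℕ)} (hs : (A.map Prod.fst).Pairwise (· < ·))
    {c : ℕ} (hc : c < mxh A) :
    ∃ q ∈ A, ht A q = c + 1 ∧ q.1 = (Cpred A).getD c 0 := by
  rw [Cpred_getD hc]
  have hne : (pile A c).map Prod.fst ≠ [] := by
    simpa using pile_ne_nil hs hc
  obtain ⟨q, hqp, hq⟩ := mem_map.mp (nmin_mem hne)
  obtain ⟨hqA, hqh⟩ := mem_pile_iff.mp hqp
  exact ⟨q, hqA, hqh, hq⟩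

lemma sorted_getD_mono {l : List ℕ} (hs : l.Pairwise (· < ·)) {i j : ℕ}
    (hij : i ≤ j) (hj : j < l.length) : l.getD i 0 ≤ l.getD j 0 := by
  rcases eq_or_lt_of_le hij with rfl | hij'
  · exact le_rfl
  · rw [getD_eq_getElem _ _ (lt_of_le_of_lt hij hj), getD_eq_getElem _ _ hj]
    exact le_of_lt (List.pairwise_iff_getElem.mp hs i j _ _ hij')

lemma Tpred_sorted {A : List (ℕ × ℕ)} (hs : (A.map Prod.fst).Pairwise (· < ·)) :
    (Tpred A).Pairwise (· < ·) := by
  rw [List.pairwise_iff_getElem]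
  intro i j hi hj hij
  rw [Tpred_length] at hi hj
  obtain ⟨q, hqA, hqh, hq⟩ := Tpred_mem hs hj
  obtain ⟨r, hrA, hrh, hr1, hr2⟩ := descLe hs (ht A q - (i+1)) q (i+1) hqA (by omega) (by omega) rfl
  have h1 : (Tpred A)[i] = (Tpred A).getD i 0 := (getD_eq_getElem _ _ (by rw [Tpred_length]; omega)).symm
  have h2 : (Tpred A)[j] = (Tpred A).getD j 0 := (getD_eq_getElem _ _ (by rw [Tpred_length]; omega)).symm
  rw [h1, h2, ← hq]
  exact lt_of_le_of_lt (Tpred_min hrA hrh) hr2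

lemma Tpred_getElem {A : List (ℕ × ℕ)} {i : ℕ} (h : i < (Tpred A).length) :
    (Tpred A)[i] = nmin ((pile A i).map Prod.snd) := by
  have h' : i < mxh A := Tpred_length ▸ h
  rw [← getD_eq_getElem _ _ h, Tpred_getD h']

lemma Cpred_getElem {A : List (ℕ × ℕ)} {i : ℕ} (h : i < (Cpred A).length) :
    (Cpred A)[i] = nmin ((pile A i).map Prod.fst) := by
  have h' : i < mxh A := Cpred_length ▸ h
  rw [← getD_eq_getElem _ _ h, Cpred_getD h']

lemma Edge_append_iff {B : List (ℕ × ℕ)} {p : ℕ × ℕ} (hSI' : SI (B ++ [p]))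
    (hgt : ∀ q ∈ B, ht B q = ht (B ++ [p]) p → p.2 < q.2)
    {q r : ℕ × ℕ} (hq : q ∈ B) : Edge (B ++ [p]) q r ↔ Edge B q r := by
  have hlt : ∀ x ∈ B, x.1 < p.1 := fst_lt_of_sorted_append hSI'.1
  have hstab : ∀ x ∈ B, ht (B ++ [p]) x = ht B x := fun x hx => ht_append hlt hx
  have hmemB : ∀ x ∈ B, x ∈ B ++ [p] := fun x hx => by simp [hx]
  constructor
  · rintro ⟨hq', hr', hht, hl2, hmin⟩
    have hrB : r ∈ B := by
      rcases mem_append.mp hr' with h | h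
      · exact h
      · exfalso
        simp only [mem_singleton] at h
        have h2 : ht B q = ht (B ++ [p]) p := by rw [← hstab q hq, ← hht, h]
        have h3 := hgt q hq h2
        rw [h] at hl2
        omega
    refine ⟨hq, hrB, by rw [← hstab r hrB, ← hstab q hq]; exact hht, hl2, ?_⟩
    intro r' hr'B hh' hl'
    exact hmin r' (hmemB r' hr'B) (by rw [hstab r' hr'B, hstab q hq]; exact hh') hl'
  · rintro ⟨hqB, hrB, hht, hl2, hmin⟩
    refine ⟨hmemB q hq, hmemB r hrB,
      by rw [hstab r hrB, hstab q hq]; exact hht, hl2, ?_⟩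
    intro r' hr' hh' hl'
    rcases mem_append.mp hr' with h | h
    · exact hmin r' h (by rw [← hstab r' h, ← hstab q hq]; exact hh') hl'
    · exfalso
      simp only [mem_singleton] at h
      have h2 : ht B q = ht (B ++ [p]) p := by rw [← hstab q hq, ← hh', h]
      have h3 := hgt q hq h2
      rw [h] at hl'
      omega

open Classical in
theorem master : ∀ (A : List (ℕ × ℕ)), SI A → rsim A = (Tpred A, Epred A, Cpred A) := by
  intro A
  induction A using List.reverseRecOn with
  | nil =>
    intro _
    have h1 : mxh ([] : List (ℕ × ℕ)) = 0 := by simp [mxh]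
    simp [rsim, Tpred, Epred, Cpred, h1]
  | append_singleton B p IH =>
    intro hSI'
    have hSI := SI_of_append hSI'
    have hlt : ∀ x ∈ B, x.1 < p.1 := fst_lt_of_sorted_append hSI'.1
    have hne2 : ∀ x ∈ B, x.2 ≠ p.2 := snd_ne_of_nodup_append hSI'.2
    have hstab : ∀ q ∈ B, ht (B ++ [p]) q = ht B q := fun q hq => ht_append hlt hq
    have hpB : p ∈ B ++ [p] := by simp
    have hmemB : ∀ q ∈ B, q ∈ B ++ [p] := fun q hq => by simp [hq]
    have hTlen : (Tpred B).length = mxh B := Tpred_length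
    have hc'le : (Tpred B).findIdx (fun t => decide (p.2 < t)) ≤ mxh B :=
      hTlen ▸ findIdx_le_length
    have hrsim : rsim (B ++ [p]) = rstep (Tpred B, Epred B, Cpred B) p := by
      rw [rsim, foldl_append, foldl_cons, foldl_nil, ← rsim, IH hSI]
    have hS1 : ∀ j, j < (Tpred B).findIdx (fun t => decide (p.2 < t)) →
        (Tpred B).getD j 0 < p.2 := by
      intro j hj
      have hjlen : j < (Tpred B).length := lt_of_lt_of_le hj (findIdx_le_length)
      have h1 : (Tpred B).getD j 0 ≤ p.2 := by
        rw [getD_eq_getElem _ _ hjlen]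
        have := not_of_lt_findIdx (p := fun t => decide (p.2 < t)) hj
        simpa using this
      obtain ⟨q, hqB, hqh, hq2⟩ := Tpred_mem hSI.1 (c := j) (hTlen ▸ hjlen)
      have h2 : (Tpred B).getD j 0 ≠ p.2 := by rw [← hq2]; exact hne2 q hqB
      omega
    have hS2 : (Tpred B).findIdx (fun t => decide (p.2 < t)) < (Tpred B).length →
        p.2 < (Tpred B).getD ((Tpred B).findIdx (fun t => decide (p.2 < t))) 0 := by
      intro h
      rw [getD_eq_getElem _ _ h]
      have := findIdx_getElem (p := fun t => decide (p.2 < t)) (xs := Tpred B) (w := h)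
      simpa using this
    have hKEYge : (Tpred B).findIdx (fun t => decide (p.2 < t)) + 1 ≤ ht (B ++ [p]) p := by
      rcases Nat.eq_zero_or_pos ((Tpred B).findIdx (fun t => decide (p.2 < t))) with h0 | h0
      · rw [h0]; exact ht_pos hpB
      · obtain ⟨q, hqB, hqh, hq2⟩ := Tpred_mem hSI.1
          (c := (Tpred B).findIdx (fun t => decide (p.2 < t)) - 1) (by omega)
        have hq2' : q.2 < p.2 := by
          rw [hq2]; exact hS1 _ (by omega)
        have hHCB : HC B q ((Tpred B).findIdx (fun t => decide (p.2 < t))) := by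
          have := ht_spec hqB
          rw [hqh] at this
          rwa [show (Tpred B).findIdx (fun t => decide (p.2 < t)) - 1 + 1
            = (Tpred B).findIdx (fun t => decide (p.2 < t)) by omega] at this
        have hHC' : HC (B ++ [p]) q ((Tpred B).findIdx (fun t => decide (p.2 < t))) :=
          (HC_append_iff hlt hqB).mpr hHCB
        exact ht_ge (HC_extend hSI'.1 hHC' (hlt q hqB) hq2' hpB)
    have hKEYle : ht (B ++ [p]) p ≤ (Tpred B).findIdx (fun t => decide (p.2 < t)) + 1 := by
      by_contra hcon
      push_neg at hcon
      obtain ⟨r, hrB', hrht, hr1, hr2⟩ := ht_descent hSI'.1 hpB (by omega)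
      have hrB : r ∈ B := by
        rcases mem_append.mp hrB' with h | h
        · exact h
        · simp only [mem_singleton] at h; rw [h] at hr1; exact absurd hr1 (lt_irrefl _)
      have hr3 : (Tpred B).findIdx (fun t => decide (p.2 < t)) + 1 ≤ ht B r := by
        rw [← hstab r hrB]; omega
      have hrmx : ht B r ≤ mxh B := ht_le_mxh hrB
      have hc'len : (Tpred B).findIdx (fun t => decide (p.2 < t)) < (Tpred B).length := by omega
      have h5 : (Tpred B).getD (ht B r - 1) 0 ≤ r.2 := Tpred_min hrB (by omega)
      have h6 : (Tpred B).getD ((Tpred B).findIdx (fun t => decide (p.2 < t))) 0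
          ≤ (Tpred B).getD (ht B r - 1) 0 :=
        sorted_getD_mono (Tpred_sorted hSI.1) (by omega) (by rw [hTlen]; omega)
      have h7 := hS2 hc'len
      omega
    have hKEY1 : ht (B ++ [p]) p = (Tpred B).findIdx (fun t => decide (p.2 < t)) + 1 :=
      le_antisymm hKEYle hKEYge
    have hmxB' : mxh (B ++ [p])
        = max (mxh B) ((Tpred B).findIdx (fun t => decide (p.2 < t)) + 1) := by
      apply Nat.le_antisymm
      · apply mxh_le
        intro q hq
        rcases mem_append.mp hq with h | h
        · rw [hstab q h]; exact le_max_of_le_left (ht_le_mxh h)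
        · simp only [mem_singleton] at h; rw [h, hKEY1]; exact le_max_right _ _
      · apply max_le
        · rcases eq_or_ne B [] with rfl | hBne
          · simp [mxh]
          · obtain ⟨q, hq, hq'⟩ := mxh_spec hBne
            rw [← hq', ← hstab q hq]
            exact ht_le_mxh (hmemB q hq)
        · rw [← hKEY1]; exact ht_le_mxh hpB
    have hpile : ∀ c, pile (B ++ [p]) c = pile B c ++
        (if c = (Tpred B).findIdx (fun t => decide (p.2 < t)) then [p] else []) := by
      intro c
      rw [pile, filter_append]
      congr 1
      · rw [pile]
        apply filter_congr
        intro x hx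
        simp only [hstab x hx]
      · rw [filter_cons, filter_nil]
        by_cases hcc : c = (Tpred B).findIdx (fun t => decide (p.2 < t))
        · rw [if_pos (by simp only [hKEY1, hcc, decide_eq_true_eq]), if_pos hcc]
        · have hd : ¬ (ht (B ++ [p]) p = c + 1) := by rw [hKEY1]; omega
          rw [if_neg (by simpa using hd), if_neg hcc]
    have hgtA : (Tpred B).findIdx (fun t => decide (p.2 < t)) < (Tpred B).length →
        ∀ q ∈ B, ht B q = ht (B ++ [p]) p → p.2 < q.2 := by
      intro hc'len q hq hh
      rw [hKEY1] at hh
      exact lt_of_lt_of_le (hS2 hc'len) (Tpred_min hq hh)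
    have hgtB : (Tpred B).findIdx (fun t => decide (p.2 < t)) = (Tpred B).length →
        ∀ q ∈ B, ht B q = ht (B ++ [p]) p → p.2 < q.2 := by
      intro hc'eq q hq hh
      rw [hKEY1] at hh
      have := ht_le_mxh hq
      omega
    have hEstable : (∀ q ∈ B, ht B q = ht (B ++ [p]) p → p.2 < q.2) →
        (B.filter (fun x => decide (hsc (B ++ [p]) x))).map
            (fun x => (x.1, (succ (B ++ [p]) x).2)) = Epred B := by
      intro hgt
      have hiff : ∀ q ∈ B, ∀ r, Edge (B ++ [p]) q r ↔ Edge B q r :=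
        fun q hq r => Edge_append_iff hSI' hgt hq
      have h1 : B.filter (fun x => decide (hsc (B ++ [p]) x))
          = B.filter (fun x => decide (hsc B x)) := by
        apply filter_congr
        intro x hx
        simp only [decide_eq_decide]
        exact exists_congr (fun r => hiff x hx r)
      rw [h1, Epred]
      apply map_congr_left
      intro x hx
      obtain ⟨hxB, hxs⟩ := mem_filter.mp hx
      have hxs' : hsc B x := by simpa using hxs
      congr 1
      exact congrArg Prod.snd (succ_eq hSI' ((hiff x hxB _).mpr (succ_spec hxs')))
    rcases bump_split p.2 (Tpred B) with ⟨hc'len, hbump⟩ | ⟨hc'eq, hbump⟩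
    -- CASE A: bump into existing row
    · have hstep : rstep (Tpred B, Epred B, Cpred B) p
          = ((Tpred B).set ((Tpred B).findIdx (fun t => decide (p.2 < t))) p.2,
             Epred B ++ [(p.1, (Tpred B).getD ((Tpred B).findIdx (fun t => decide (p.2 < t))) 0)],
             Cpred B) := by
        simp [rstep, hbump]
      have hmx : mxh (B ++ [p]) = mxh B := by
        rw [hmxB']; rw [hTlen] at hc'len; omega
      have hc'mx : (Tpred B).findIdx (fun t => decide (p.2 < t)) < mxh B := hTlen ▸ hc'len
      rw [hrsim, hstep]
      symm
      refine Prod.ext ?_ (Prod.ext ?_ ?_)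
      -- Tpred
      · show Tpred (B ++ [p]) = (Tpred B).set _ p.2
        apply List.ext_getElem
        · rw [Tpred_length, hmx, length_set, Tpred_length]
        · intro i h1 h2
          rw [length_set] at h2
          rw [Tpred_getElem h1, getElem_set]
          by_cases hic : (Tpred B).findIdx (fun t => decide (p.2 < t)) = i
          · rw [if_pos hic, hpile, if_pos hic.symm]
            apply nmin_eq
            · rw [map_append]; simp
            · intro b hb
              rw [map_append] at hb
              rcases mem_append.mp hb with hb | hb
              · obtain ⟨x, hxp, rfl⟩ := mem_map.mp hb
                obtain ⟨hxB, hxh⟩ := mem_pile_iff.mp hxp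
                rw [← hic] at hxh
                exact le_of_lt (lt_of_lt_of_le (hS2 hc'len) (Tpred_min hxB hxh))
              · simp only [map_cons, map_nil, mem_singleton] at hb
                omega
          · rw [if_neg hic, hpile, if_neg (fun h => hic h.symm), append_nil,
              ← Tpred_getElem h2]
      -- Epred
      · show Epred (B ++ [p]) = Epred B ++ [(p.1, (Tpred B).getD _ 0)]
        obtain ⟨t, htB, hth, ht2⟩ := Tpred_mem hSI.1 hc'mx
        have hEdgep : Edge (B ++ [p]) p t := by
          refine ⟨hpB, hmemB t htB, by rw [hstab t htB, hKEY1, hth],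
            by rw [ht2]; exact hS2 hc'len, ?_⟩
          intro r hr hhr hlr
          rcases mem_append.mp hr with h | h
          · rw [hstab r h, hKEY1] at hhr
            rw [ht2]
            exact Tpred_min h hhr
          · simp only [mem_singleton] at h; rw [h] at hlr; exact absurd hlr (lt_irrefl _)
        have hscp : hsc (B ++ [p]) p := ⟨t, hEdgep⟩
        rw [Epred, filter_append, map_append, hEstable (hgtA hc'len)]
        congr 1
        rw [filter_cons, filter_nil, if_pos (by simpa using hscp), map_cons, map_nil,
          succ_eq hSI' hEdgep, ht2]
      -- Cpred
      · show Cpred (B ++ [p]) = Cpred B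
        apply List.ext_getElem
        · rw [Cpred_length, hmx, Cpred_length]
        · intro i h1 h2
          rw [Cpred_getElem h1, Cpred_getElem h2]
          by_cases hic : i = (Tpred B).findIdx (fun t => decide (p.2 < t))
          · rw [hpile, if_pos hic, map_append]
            have hpne : (pile B i).map Prod.fst ≠ [] := by
              simpa using pile_ne_nil hSI.1 (Cpred_length ▸ h2)
            apply nmin_eq
            · exact mem_append_left _ (nmin_mem hpne)
            · intro b hb
              rcases mem_append.mp hb with hb | hb
              · exact nmin_le hb
              · simp only [map_cons, map_nil, mem_singleton] at hb
                obtain ⟨x, hxp, hx⟩ := mem_map.mp (nmin_mem hpne)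
                have hxB := (mem_pile_iff.mp hxp).1
                rw [← hx, hb]
                exact le_of_lt (hlt x hxB)
          · rw [hpile, if_neg hic, append_nil]
    -- CASE B: new pile
    · have hstep : rstep (Tpred B, Epred B, Cpred B) p
          = (Tpred B ++ [p.2], Epred B, Cpred B ++ [p.1]) := by
        simp [rstep, hbump]
      have hc'eq' : (Tpred B).findIdx (fun t => decide (p.2 < t)) = mxh B := hTlen ▸ hc'eq
      have hmx : mxh (B ++ [p]) = mxh B + 1 := by rw [hmxB', hc'eq']; omega
      have hpilemx : pile B (mxh B) = [] := by
        rw [pile, filter_eq_nil_iff]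
        intro q hq
        have := ht_le_mxh hq
        simp only [decide_eq_true_eq]
        omega
      rw [hrsim, hstep]
      symm
      refine Prod.ext ?_ (Prod.ext ?_ ?_)
      -- Tpred
      · show Tpred (B ++ [p]) = Tpred B ++ [p.2]
        rw [Tpred, hmx, range_succ, map_append, map_cons, map_nil]
        congr 1
        · rw [Tpred]
          apply map_congr_left
          intro c hcr
          rw [mem_range] at hcr
          rw [hpile, if_neg (by omega), append_nil]
        · rw [hpile, if_pos hc'eq'.symm, hpilemx]
          rfl
      -- Epred
      · show Epred (B ++ [p]) = Epred B
        rw [Epred, filter_append, map_append, hEstable (hgtB hc'eq)]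
        have hnp : ¬ hsc (B ++ [p]) p := by
          rintro ⟨r, hrm, hr', hht, hl2, _⟩
          rcases mem_append.mp hr' with h | h
          · rw [hstab r h, hKEY1, hc'eq'] at hht
            have := ht_le_mxh h
            omega
          · simp only [mem_singleton] at h; rw [h] at hl2; exact absurd hl2 (lt_irrefl _)
        rw [filter_cons, filter_nil, if_neg (by simpa using hnp)]
        simp
      -- Cpred
      · show Cpred (B ++ [p]) = Cpred B ++ [p.1]
        rw [Cpred, hmx, range_succ, map_append, map_cons, map_nil]
        congr 1
        · rw [Cpred]
          apply map_congr_left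
          intro c hcr
          rw [mem_range] at hcr
          rw [hpile, if_neg (by omega), append_nil]
        · rw [hpile, if_pos hc'eq'.symm, hpilemx]
          rfl

def psw (p : ℕ × ℕ) : ℕ × ℕ := (p.2, p.1)

def invL (A : List (ℕ × ℕ)) : List (ℕ × ℕ) :=
  (A.map psw).mergeSort (fun p q => decide (p.1 ≤ q.1))

lemma psw_psw (p : ℕ × ℕ) : psw (psw p) = p := rfl

lemma fst_comp_psw : Prod.fst ∘ psw = Prod.snd := rfl

lemma snd_comp_psw : Prod.snd ∘ psw = Prod.fst := rfl

lemma map_psw_psw (A : List (ℕ × ℕ)) : (A.map psw).map psw = A := by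
  rw [map_map]
  have : psw ∘ psw = id := funext fun p => rfl
  rw [this, map_id]

lemma invL_perm (A : List (ℕ × ℕ)) : invL A ~ A.map psw :=
  mergeSort_perm _ _

lemma invL_length (A : List (ℕ × ℕ)) : (invL A).length = A.length := by
  rw [(invL_perm A).length_eq, length_map]

lemma mem_invL {A : List (ℕ × ℕ)} {x : ℕ × ℕ} : x ∈ invL A ↔ ∃ p ∈ A, psw p = x := by
  rw [(invL_perm A).mem_iff, mem_map]

lemma invL_sorted_le (A : List (ℕ × ℕ)) :
    List.Pairwise (fun p q : ℕ × ℕ => p.1 ≤ q.1) (invL A) := by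
  have h := pairwise_mergeSort (le := fun p q : ℕ × ℕ => decide (p.1 ≤ q.1))
    (fun a b c hab hbc => by simp at hab hbc ⊢; omega)
    (fun a b => by simp [Nat.le_total]) (A.map psw)
  exact h.imp (fun hab => by simpa using hab)

lemma strict_of_le_nodup {l : List (ℕ × ℕ)}
    (h : List.Pairwise (fun p q : ℕ × ℕ => p.1 ≤ q.1) l)
    (hn : (l.map Prod.fst).Nodup) : (l.map Prod.fst).Pairwise (· < ·) := by
  show List.Pairwise _ _
  rw [pairwise_map]
  have hn' : List.Pairwise (fun p q : ℕ × ℕ => p.1 ≠ q.1) l := pairwise_map.mp hn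
  exact (h.and hn').imp (fun hab => lt_of_le_of_ne hab.1 hab.2)

lemma nodup_fst_of_sorted {A : List (ℕ × ℕ)} (h : (A.map Prod.fst).Pairwise (· < ·)) :
    (A.map Prod.fst).Nodup :=
  h.imp (fun hab => ne_of_lt hab)

lemma SI_invL {A : List (ℕ × ℕ)} (hA : SI A) : SI (invL A) := by
  constructor
  · apply strict_of_le_nodup (invL_sorted_le A)
    have hp : (invL A).map Prod.fst ~ A.map Prod.snd := by
      have := (invL_perm A).map Prod.fst
      rwa [map_map, fst_comp_psw] at this
    exact hp.symm.nodup hA.2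
  · have hp : (invL A).map Prod.snd ~ A.map Prod.fst := by
      have := (invL_perm A).map Prod.snd
      rwa [map_map, snd_comp_psw] at this
    exact hp.symm.nodup (nodup_fst_of_sorted hA.1)

lemma sub_of_sorted {l m : List (ℕ × ℕ)} (hsub : l <+~ m)
    (hl : (l.map Prod.fst).Pairwise (· < ·)) (hm : (m.map Prod.fst).Pairwise (· < ·)) :
    l <+ m := by
  haveI : IsAntisymm (ℕ × ℕ) (fun p q : ℕ × ℕ => p.1 < q.1) :=
    ⟨fun a b h h' => absurd (h.trans h') (lt_irrefl _)⟩
  exact sublist_of_subperm_of_pairwise hsub (pairwise_map.mp hl) (pairwise_map.mp hm)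

lemma HC_invL {A : List (ℕ × ℕ)} (hA : SI A) {p : ℕ × ℕ} {k : ℕ} (h : HC A p k) :
    HC (invL A) (psw p) k := by
  obtain ⟨c, hc, hchain, hlast, rfl⟩ := h
  refine ⟨c.map psw, ?_, ?_, ?_, by simp⟩
  · apply sub_of_sorted
    · exact (hc.map psw).subperm.trans (invL_perm A).symm.subperm
    · rw [map_map, fst_comp_psw]
      exact hchain
    · exact (SI_invL hA).1
  · rw [map_map, snd_comp_psw]
    exact Pairwise.sublist (hc.map Prod.fst) hA.1
  · rw [getLast?_map, hlast]
    rfl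

lemma invL_invL {A : List (ℕ × ℕ)} (hA : SI A) : invL (invL A) = A := by
  haveI : IsAntisymm (ℕ × ℕ) (fun p q : ℕ × ℕ => p.1 < q.1) :=
    ⟨fun a b h h' => absurd (h.trans h') (lt_irrefl _)⟩
  apply eq_of_perm_of_sorted (r := fun p q : ℕ × ℕ => p.1 < q.1)
  · calc invL (invL A) ~ (invL A).map psw := invL_perm _
      _ ~ (A.map psw).map psw := (invL_perm A).map psw
      _ = A := map_psw_psw A
  · exact pairwise_map.mp (SI_invL (SI_invL hA)).1
  · exact pairwise_map.mp hA.1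

lemma HC_invL_iff {A : List (ℕ × ℕ)} (hA : SI A) {p : ℕ × ℕ} {k : ℕ} :
    HC (invL A) (psw p) k ↔ HC A p k := by
  constructor
  · intro h
    have := HC_invL (SI_invL hA) h
    rwa [invL_invL hA, psw_psw] at this
  · exact HC_invL hA

open Classical in
lemma ht_invL {A : List (ℕ × ℕ)} (hA : SI A) (p : ℕ × ℕ) :
    ht (invL A) (psw p) = ht A p := by
  rw [ht, ht, invL_length]
  exact findGreatest_congr (fun k => HC_invL_iff hA) _

open Classical in
lemma mxh_invL {A : List (ℕ × ℕ)} (hA : SI A) : mxh (invL A) = mxh A := by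
  rw [mxh, mxh, invL_length]
  apply findGreatest_congr
  intro k
  constructor
  · rintro ⟨q, hq, hq'⟩
    obtain ⟨x, hx, rfl⟩ := mem_invL.mp hq
    exact ⟨x, hx, by rwa [ht_invL hA] at hq'⟩
  · rintro ⟨x, hx, hx'⟩
    exact ⟨psw x, mem_invL.mpr ⟨x, hx, rfl⟩, by rwa [ht_invL hA]⟩

lemma pile_invL_perm {A : List (ℕ × ℕ)} (hA : SI A) (c : ℕ) :
    pile (invL A) c ~ (pile A c).map psw := by
  have h1 : pile (invL A) c ~ (A.map psw).filter (fun p => decide (ht (invL A) p = c + 1)) :=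
    Perm.filter _ (invL_perm A)
  rw [filter_map] at h1
  have h2 : A.filter ((fun p => decide (ht (invL A) p = c + 1)) ∘ psw)
      = pile A c := by
    rw [pile]
    apply filter_congr
    intro x _
    simp only [Function.comp_apply, ht_invL hA]
  rwa [h2] at h1

lemma Tpred_invL {A : List (ℕ × ℕ)} (hA : SI A) : Tpred (invL A) = Cpred A := by
  rw [Tpred, Cpred, mxh_invL hA]
  apply map_congr_left
  intro c _
  apply nmin_perm
  have := (pile_invL_perm hA c).map Prod.snd
  rwa [map_map, snd_comp_psw] at this

lemma fst_inj_of_SI {A : List (ℕ × ℕ)} (hA : SI A) {p q : ℕ × ℕ}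
    (hp : p ∈ A) (hq : q ∈ A) (h : p.1 = q.1) : p = q :=
  inj_on_of_nodup_map (nodup_fst_of_sorted hA.1) hp hq h

lemma pile_antichain {A : List (ℕ × ℕ)} (hA : SI A) {p q : ℕ × ℕ}
    (hp : p ∈ A) (hq : q ∈ A) (hht : ht A p = ht A q) (h1 : p.1 < q.1) : q.2 < p.2 := by
  by_contra hcon
  push_neg at hcon
  rcases eq_or_lt_of_le hcon with h | h
  · have : p = q := inj_on_of_nodup_map hA.2 hp hq h
    rw [this] at h1; exact absurd h1 (lt_irrefl _)
  · have := ht_lt_of_dom hA.1 hq hp h1 h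
    omega

lemma Edge_invL {A : List (ℕ × ℕ)} (hA : SI A) {p q : ℕ × ℕ} (h : Edge A p q) :
    Edge (invL A) (psw q) (psw p) := by
  obtain ⟨hp, hq, hht, hl2, hmin⟩ := h
  have hq1p1 : q.1 < p.1 := by
    rcases lt_trichotomy p.1 q.1 with h' | h' | h'
    · have := pile_antichain hA hp hq hht.symm h'
      omega
    · have : p = q := fst_inj_of_SI hA hp hq h'
      rw [this] at hl2; omega
    · exact h'
  refine ⟨mem_invL.mpr ⟨q, hq, rfl⟩, mem_invL.mpr ⟨p, hp, rfl⟩,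
    by rw [ht_invL hA, ht_invL hA]; exact hht.symm, hq1p1, ?_⟩
  intro R hR hhR hlR
  obtain ⟨r, hr, rfl⟩ := mem_invL.mp hR
  rw [ht_invL hA, ht_invL hA] at hhR
  show p.1 ≤ r.1
  by_contra hcon
  push_neg at hcon
  have h1 : r.2 < q.2 := pile_antichain hA hq hr hhR.symm hlR
  have h2 : p.2 < r.2 := pile_antichain hA hr hp (by rw [hhR, ← hht]) hcon
  have := hmin r hr (by rw [hhR, ← hht]) h2
  omega

lemma Edge_invL_iff {A : List (ℕ × ℕ)} (hA : SI A) {p q : ℕ × ℕ} :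
    Edge (invL A) (psw q) (psw p) ↔ Edge A p q := by
  constructor
  · intro h
    have := Edge_invL (SI_invL hA) h
    rwa [invL_invL hA, psw_psw, psw_psw] at this
  · exact Edge_invL hA

lemma nodup_of_SI {A : List (ℕ × ℕ)} (hA : SI A) : A.Nodup :=
  Nodup.of_map Prod.fst (nodup_fst_of_sorted hA.1)

lemma Edge_left_unique {A : List (ℕ × ℕ)} (hA : SI A) {x y q : ℕ × ℕ}
    (h1 : Edge A x q) (h2 : Edge A y q) : x = y := by
  obtain ⟨hx, hq, hh1, hl1, hm1⟩ := h1
  obtain ⟨hy, _, hh2, hl2, hm2⟩ := h2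
  by_contra hne
  have hxy : x.2 ≠ y.2 := fun h => hne (inj_on_of_nodup_map hA.2 hx hy h)
  rcases lt_or_gt_of_ne hxy with h | h
  · have := hm1 y hy (by rw [← hh2, hh1]) h
    omega
  · have := hm2 x hx (by rw [← hh1, hh2]) h
    omega

open Classical in
lemma map_fst_Epred {A : List (ℕ × ℕ)} :
    (Epred A).map Prod.fst = (A.filter (fun p => decide (hsc A p))).map Prod.fst := by
  rw [Epred, map_map]
  rfl

open Classical in
lemma Epred_fst_sorted {A : List (ℕ × ℕ)} (hA : SI A) :
    ((Epred A).map Prod.fst).Pairwise (· < ·) := by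
  rw [map_fst_Epred]
  exact Pairwise.sublist ((filter_sublist (l := A)).map Prod.fst) hA.1

open Classical in
lemma Epred_snd_nodup {A : List (ℕ × ℕ)} (hA : SI A) :
    ((Epred A).map Prod.snd).Nodup := by
  rw [Epred, map_map]
  show ((A.filter (fun p => decide (hsc A p))).map
    (fun p => (succ A p).2)).Nodup
  apply Nodup.map_on
  · intro x hx y hy hxy
    obtain ⟨hxA, hxs⟩ := mem_filter.mp hx
    obtain ⟨hyA, hys⟩ := mem_filter.mp hy
    have hxs' : hsc A x := by simpa using hxs
    have hys' : hsc A y := by simpa using hys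
    have hex := succ_spec hxs'
    have hey := succ_spec hys'
    have : succ A x = succ A y :=
      inj_on_of_nodup_map hA.2 hex.2.1 hey.2.1 hxy
    exact Edge_left_unique hA hex (this ▸ hey)
  · exact Nodup.filter _ (nodup_of_SI hA)

lemma Epred_nodup {A : List (ℕ × ℕ)} (hA : SI A) : (Epred A).Nodup :=
  Nodup.of_map Prod.fst (nodup_fst_of_sorted (Epred_fst_sorted hA))

lemma SI_Epred {A : List (ℕ × ℕ)} (hA : SI A) : SI (Epred A) :=
  ⟨Epred_fst_sorted hA, Epred_snd_nodup hA⟩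

open Classical in
lemma mem_Epred_iff {A : List (ℕ × ℕ)} (hA : SI A) {z : ℕ × ℕ} :
    z ∈ Epred A ↔ ∃ x q, Edge A x q ∧ z = (x.1, q.2) := by
  rw [Epred, mem_map]
  constructor
  · rintro ⟨x, hx, rfl⟩
    obtain ⟨hxA, hxs⟩ := mem_filter.mp hx
    have hxs' : hsc A x := by simpa using hxs
    exact ⟨x, succ A x, succ_spec hxs', rfl⟩
  · rintro ⟨x, q, hE, rfl⟩
    refine ⟨x, mem_filter.mpr ⟨hE.1, by simpa using ⟨q, hE⟩⟩, ?_⟩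
    rw [succ_eq hA hE]

lemma Epred_invL {A : List (ℕ × ℕ)} (hA : SI A) : Epred (invL A) = invL (Epred A) := by
  haveI : IsAntisymm (ℕ × ℕ) (fun p q : ℕ × ℕ => p.1 < q.1) :=
    ⟨fun a b h h' => absurd (h.trans h') (lt_irrefl _)⟩
  apply eq_of_perm_of_sorted (r := fun p q : ℕ × ℕ => p.1 < q.1) ?_ ?_ ?_
  · have h1 : Epred (invL A) ~ (Epred A).map psw := by
      rw [perm_ext_iff_of_nodup (Epred_nodup (SI_invL hA))
        ((Epred_nodup hA).map (fun a b hab => by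
          simp only [psw, Prod.mk.injEq] at hab
          exact Prod.ext hab.2 hab.1))]
      intro z
      rw [mem_Epred_iff (SI_invL hA), mem_map]
      constructor
      · rintro ⟨X, Q, hE, rfl⟩
        obtain ⟨q, hq, rfl⟩ := mem_invL.mp hE.1
        obtain ⟨x, hx, rfl⟩ := mem_invL.mp hE.2.1
        have hE' : Edge A x q := (Edge_invL_iff hA).mp hE
        exact ⟨(x.1, q.2), mem_Epred_iff hA |>.mpr ⟨x, q, hE', rfl⟩, rfl⟩
      · rintro ⟨y, hy, rfl⟩
        obtain ⟨x, q, hE, rfl⟩ := (mem_Epred_iff hA).mp hy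
        exact ⟨psw q, psw x, (Edge_invL_iff hA).mpr hE, rfl⟩
    exact h1.trans (invL_perm (Epred A)).symm
  · exact pairwise_map.mp (Epred_fst_sorted (SI_invL hA))
  · apply pairwise_map.mp
    apply strict_of_le_nodup (invL_sorted_le _)
    have hp : (invL (Epred A)).map Prod.fst ~ (Epred A).map Prod.snd := by
      have := (invL_perm (Epred A)).map Prod.fst
      rwa [map_map, fst_comp_psw] at this
    exact hp.symm.nodup (Epred_snd_nodup hA)

open Classical in
lemma Epred_length_lt {A : List (ℕ × ℕ)} (hA : SI A) (hne : A ≠ []) :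
    (Epred A).length < A.length := by
  rw [Epred, length_map]
  obtain ⟨m2, hm2, hmax⟩ := exists_max_nat (A.map Prod.snd) (by simpa using hne)
  obtain ⟨m, hm, rfl⟩ := mem_map.mp hm2
  have hnm : ¬ hsc A m := by
    rintro ⟨q, _, hq, _, hl, _⟩
    have := hmax q.2 (mem_map_of_mem hq)
    omega
  apply lt_of_le_of_ne (length_filter_le _ _)
  intro heq
  have : A.filter (fun p => decide (hsc A p)) = A :=
    (filter_sublist (l := A)).eq_of_length heq
  have hmf : m ∈ A.filter (fun p => decide (hsc A p)) := by rw [this]; exact hm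
  exact hnm (by simpa using (mem_filter.mp hmf).2)

theorem MAIN : ∀ (n : ℕ) (A : List (ℕ × ℕ)), A.length ≤ n → SI A →
    (PQL A).2 = (PQL (invL A)).1 := by
  intro n
  induction n with
  | zero =>
    intro A hlen _
    have hA : A = [] := eq_nil_of_length_eq_zero (Nat.le_antisymm hlen (Nat.zero_le _))
    subst hA
    have h0 : invL ([] : List (ℕ × ℕ)) = [] := by rw [invL, map_nil, mergeSort_nil]
    rw [h0]; rfl
  | succ n ih =>
    intro A hlen hA
    rcases eq_or_ne A [] with rfl | hne
    · have h0 : invL ([] : List (ℕ × ℕ)) = [] := by rw [invL, map_nil, mergeSort_nil]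
      rw [h0]; rfl
    · have hIA := SI_invL hA
      have hinvne : invL A ≠ [] := by
        intro h
        have h2 := invL_length A
        rw [h] at h2
        exact hne (eq_nil_of_length_eq_zero h2.symm)
      rw [DEC0 hne, DEC0 hinvne, master A hA, master (invL A) hIA]
      dsimp only
      rw [Tpred_invL hA, Epred_invL hA]
      congr 1
      exact ih (Epred A) (by have := Epred_length_lt hA hne; omega) (SI_Epred hA)

/-- labelled word of a plain word -/
def ZW (u : List ℕ) : List (ℕ × ℕ) :=
  (List.range u.length).map (fun k => (k + 1, u.getD k 0))

lemma ZW_fst_sorted (u : List ℕ) : ((ZW u).map Prod.fst).Pairwise (· < ·) := by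
  rw [ZW, map_map]
  show List.Pairwise _ _
  rw [pairwise_map]
  exact (pairwise_lt_range (n := u.length)).imp (fun h => by simpa using h)

lemma ZW_snd (u : List ℕ) : (ZW u).map Prod.snd = u := by
  rw [ZW, map_map]
  apply List.ext_getElem
  · simp
  · intro i h1 h2
    simp only [List.getElem_map, List.getElem_range, Function.comp_apply]
    rw [getD_eq_getElem _ _ h2]

lemma SI_ZW {u : List ℕ} (hu : u.Nodup) : SI (ZW u) :=
  ⟨ZW_fst_sorted u, by rw [ZW_snd]; exact hu⟩

lemma mem_ZW {u : List ℕ} {z : ℕ × ℕ} :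
    z ∈ ZW u ↔ ∃ k, k < u.length ∧ z = (k + 1, u.getD k 0) := by
  rw [ZW, mem_map]
  constructor
  · rintro ⟨k, hk, rfl⟩
    exact ⟨k, mem_range.mp hk, rfl⟩
  · rintro ⟨k, hk, rfl⟩
    exact ⟨k, mem_range.mpr hk, rfl⟩

lemma PQ_PQL : ∀ u : List ℕ,
    PQ u = PQL (ZW u)
    ∧ (PQ u).1.length = (PQ u).2.length
    ∧ ∀ i, (((PQ u).1.getD i []).length = ((PQ u).2.getD i []).length) := by
  intro u
  induction u using List.reverseRecOn with
  | nil => exact ⟨rfl, rfl, fun i => rfl⟩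
  | append_singleton u x IH =>
    obtain ⟨IH1, IH2, IH3⟩ := IH
    have hgetD : ∀ k, k < u.length → (u ++ [x]).getD k 0 = u.getD k 0 :=
      fun k hk => getD_append _ _ _ _ hk
    have hgetn : (u ++ [x]).getD u.length 0 = x := by
      rw [getD_eq_getElem _ _ (by simp)]
      exact getElem_concat_length (l := u) (a := x) rfl _
    have hlen1 : (u ++ [x]).length = u.length + 1 := by simp
    have hstep1 : PQ (u ++ [x]) = (insertT x (PQ u).1,
        Qstep (PQ u).1 (insertT x (PQ u).1) (PQ u).2 (u.length + 1)) := by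
      rw [PQ, hlen1, range_succ, foldl_append]
      have he : (List.range u.length).foldl
          (fun pq k =>
            let p' := insertT ((u ++ [x]).getD k 0) pq.1
            (p', Qstep pq.1 p' pq.2 (k + 1))) ([], [])
          = PQ u := by
        rw [PQ]
        apply foldl_ext
        intro pq k hk
        rw [mem_range] at hk
        simp only [hgetD k hk]
      rw [he, foldl_cons, foldl_nil, hgetn]
    have hzip : ZW (u ++ [x]) = ZW u ++ [(u.length + 1, x)] := by
      rw [ZW, ZW, hlen1, range_succ, map_append]
      congr 1
      · apply map_congr_left
        intro k hk
        rw [mem_range] at hk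
        rw [hgetD k hk]
      · rw [map_cons, map_nil, hgetn]
    have hq := Qstep_qstep IH2 IH3 x (u.length + 1)
    have hmain : PQ (u ++ [x]) = PQL (ZW (u ++ [x])) := by
      rw [hstep1, hzip, PQL, foldl_append, ← PQL, ← IH1, foldl_cons, foldl_nil]
      show _ = (insertT x (PQ u).1, qstep (gr x (PQ u).1) (PQ u).2 (u.length + 1))
      rw [hq]
    refine ⟨hmain, ?_, ?_⟩
    · rw [hstep1]
      dsimp only
      rw [hq]
      exact (ShEq_step IH2 IH3 x (u.length + 1)).1
    · intro i
      rw [hstep1]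
      dsimp only
      rw [hq]
      exact (ShEq_step IH2 IH3 x (u.length + 1)).2 i

lemma word_nodup {N : ℕ} (w : Equiv.Perm (Fin N)) : (word w).Nodup := by
  rw [word, nodup_ofFn]
  intro i j hij
  simp only [Nat.add_right_cancel_iff] at hij
  exact w.injective (Fin.ext hij)

lemma word_length {N : ℕ} (w : Equiv.Perm (Fin N)) : (word w).length = N := by
  simp [word]

lemma word_getD {N : ℕ} (w : Equiv.Perm (Fin N)) {k : ℕ} (hk : k < N) :
    (word w).getD k 0 = (w ⟨k, hk⟩ : ℕ) + 1 := by
  rw [word, getD_eq_getElem _ _ (by simp [hk]), List.getElem_ofFn]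

lemma ZW_word_inv {N : ℕ} (w : Equiv.Perm (Fin N)) :
    invL (ZW (word w)) = ZW (word w⁻¹) := by
  haveI : IsAntisymm (ℕ × ℕ) (fun p q : ℕ × ℕ => p.1 < q.1) :=
    ⟨fun a b h h' => absurd (h.trans h') (lt_irrefl _)⟩
  have hSIw := SI_ZW (word_nodup w)
  have hSIw' := SI_ZW (word_nodup w⁻¹)
  apply eq_of_perm_of_sorted (r := fun p q : ℕ × ℕ => p.1 < q.1) ?_ ?_ ?_
  · rw [perm_ext_iff_of_nodup (nodup_of_SI (SI_invL hSIw)) (nodup_of_SI hSIw')]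
    intro z
    rw [mem_invL, mem_ZW]
    constructor
    · rintro ⟨p, hp, rfl⟩
      obtain ⟨k, hk, rfl⟩ := mem_ZW.mp hp
      rw [word_length] at hk
      rw [word_getD w hk]
      refine ⟨(w ⟨k, hk⟩ : ℕ), by rw [word_length]; exact (w ⟨k, hk⟩).2, ?_⟩
      rw [word_getD w⁻¹ (w ⟨k, hk⟩).2]
      have : w⁻¹ ⟨(w ⟨k, hk⟩ : ℕ), (w ⟨k, hk⟩).2⟩ = ⟨k, hk⟩ := by
        simp [Fin.eta]
      rw [this]
      rfl
    · rintro ⟨j, hj, rfl⟩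
      rw [word_length] at hj
      rw [word_getD w⁻¹ hj]
      refine ⟨((w⁻¹ ⟨j, hj⟩ : ℕ) + 1, j + 1), ?_, ?_⟩
      · rw [mem_ZW]
        refine ⟨(w⁻¹ ⟨j, hj⟩ : ℕ), by rw [word_length]; exact (w⁻¹ ⟨j, hj⟩).2, ?_⟩
        rw [word_getD w (w⁻¹ ⟨j, hj⟩).2]
        have : w ⟨(w⁻¹ ⟨j, hj⟩ : ℕ), (w⁻¹ ⟨j, hj⟩).2⟩ = ⟨j, hj⟩ := by
          simp [Fin.eta]
        rw [this]
      · rfl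
  · exact pairwise_map.mp (SI_invL hSIw).1
  · exact pairwise_map.mp hSIw'.1

end RSK

/-- For any permutation `w ∈ S_N`, the recording tableau of the Robinson–Schensted
correspondence applied to `w` equals the insertion tableau applied to `w⁻¹`:
`Q(w) = P(w⁻¹)`. -/
theorem stmt6 {N : ℕ} (w : Equiv.Perm (Fin N)) :
    (PQ (word w)).2 = (PQ (word w⁻¹)).1 := by
  rw [(PQ_PQL (word w)).1, (PQ_PQL (word w⁻¹)).1, ← ZW_word_inv w]
  exact MAIN (ZW (word w)).length (ZW (word w)) le_rfl (SI_ZW (word_nodup w))
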